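/- arXiv:2507.12339 — 10 statements merged into one kernel-verified Lean document; each statement's English description precedes it below -/
import Mathlib

section
/- Let T be a topological space, ι a finite index type, and P : ι → Set T a family of subsets whose union is all of T. Then for every subset K ⊆ T, K is contained in the interior of the union ⋃_{i ∈ A} P i, where A = {i : closure (P i) ∩ K ≠ ∅} is the set of indices whose cell closure meets K. -/
/-- Abstract topological core of Lemma 3.1: for a finite cover `P` of `T`, any set `K`
is contained in the interior of the union of the cells whose closures meet `K`. -/
theorem subset_interior_iUnion_of_closure_inter
    {T : Type*} [TopologicalSpace T] {ι : Type*} [Finite ι]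
    (P : ι → Set T) (hcover : (⋃ i, P i) = Set.univ) (K : Set T) :
    K ⊆ interior (⋃ i ∈ {i : ι | (closure (P i) ∩ K).Nonempty}, P i) := by
  intro x hx
  set A : Set ι := {i : ι | (closure (P i) ∩ K).Nonempty}
  set U : Set T := (⋃ i ∈ Aᶜ, closure (P i))ᶜ
  have hUopen : IsOpen U := by
    apply isOpen_compl_iff.mpr
    exact Set.Finite.isClosed_biUnion (Set.toFinite _) fun i _ => isClosed_closure
  have hxU : x ∈ U := by
    simp only [U, Set.mem_compl_iff, Set.mem_iUnion]
    rintro ⟨i, hi, hxc⟩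
    exact hi ⟨x, hxc, hx⟩
  have hsub : U ⊆ ⋃ i ∈ A, P i := by
    intro y hy
    have : y ∈ ⋃ i, P i := hcover ▸ Set.mem_univ y
    obtain ⟨i, hyi⟩ := Set.mem_iUnion.mp this
    by_cases hiA : i ∈ A
    · exact Set.mem_biUnion hiA hyi
    · exact absurd (Set.mem_biUnion (show i ∈ Aᶜ from hiA) (subset_closure hyi)) hy
  exact interior_maximal hsub hUopen hxU
end

section
/- (Lemma 3.1.) For every cell index i and input u, the closure of the over-approximated reachable set Fbar i u is contained in the interior of the concretization of its symbolic successor set: closure (Fbar i u) ⊆ interior (Q⁻¹(Δd(i,u))). -/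
open Metric Set Pointwise

/-- The symbolic successor set `Δd(i,u)`: indices `j` whose cell closure meets the
closure of the over-approximated reachable set. -/
def symbSucc {E ι Ud : Type*} [TopologicalSpace E]
    (P : ι → Set E) (Fbar : ι → Ud → Set E) (i : ι) (u : Ud) : Set ι :=
  {j | (closure (Fbar i u) ∩ closure (P j)).Nonempty}

/-- Concretization `Q⁻¹(A) = ⋃_{j ∈ A} P j`. -/
def conc {E ι : Type*} (P : ι → Set E) (A : Set ι) : Set E :=
  ⋃ j ∈ A, P j

/-- The admissible-margin set `S = {ε : 0 ≤ ε ∧ K + closedBall 0 ε ⊆ interior V}`. -/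
def marginSet {E : Type*} [SeminormedAddCommGroup E] (K V : Set E) : Set ℝ :=
  {ε : ℝ | 0 ≤ ε ∧ K + closedBall (0 : E) ε ⊆ interior V}

/-- The robustness margin `η(i,u) = sSup S(i,u)`. -/
noncomputable def eta {E ι Ud : Type*} [SeminormedAddCommGroup E]
    (P : ι → Set E) (Fbar : ι → Ud → Set E) (i : ι) (u : Ud) : ℝ :=
  sSup (marginSet (closure (Fbar i u)) (conc P (symbSucc P Fbar i u)))

/-- Lemma 3.1: the closure of the over-approximated reachable set is contained in the
interior of the concretization of its symbolic successor set. -/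
theorem closure_Fbar_subset_interior_conc_symbSucc
    {n q : ℕ} {ι Ud : Type*} [Fintype ι]
    (P : ι → Set (EuclideanSpace ℝ (Fin n)))
    (hdisj : Pairwise (Function.onFun Disjoint P))
    (hcover : (⋃ i, P i) = Set.univ)
    (Q : EuclideanSpace ℝ (Fin n) → ι) (hQ : ∀ x, x ∈ P (Q x))
    (D : Set (EuclideanSpace ℝ (Fin q)))
    (f : EuclideanSpace ℝ (Fin n) → Ud → EuclideanSpace ℝ (Fin q) → EuclideanSpace ℝ (Fin n))
    (Fbar : ι → Ud → Set (EuclideanSpace ℝ (Fin n)))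
    (hFbar : ∀ i u x d, x ∈ P i → d ∈ D → f x u d ∈ Fbar i u)
    (i : ι) (u : Ud) :
    closure (Fbar i u) ⊆ interior (conc P (symbSucc P Fbar i u)) := by
  set Δ := symbSucc P Fbar i u with hΔ
  set B : Set (EuclideanSpace ℝ (Fin n)) := ⋃ j ∈ Δᶜ, closure (P j) with hB
  have hBclosed : IsClosed B := by
    apply Set.Finite.isClosed_biUnion (Set.toFinite _)
    intro j _; exact isClosed_closure
  have hsub : Bᶜ ⊆ conc P Δ := by
    intro y hy
    have := hcover ▸ Set.mem_univ y
    obtain ⟨j, hj⟩ := Set.mem_iUnion.mp ((hcover.symm ▸ Set.mem_univ y) : y ∈ ⋃ i, P i)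
    have hjΔ : j ∈ Δ := by
      by_contra hjc
      exact hy (Set.mem_biUnion hjc (subset_closure hj))
    exact Set.mem_biUnion hjΔ hj
  intro x hx
  apply interior_mono hsub
  rw [hBclosed.isOpen_compl.interior_eq]
  intro hxB
  obtain ⟨j, hjc, hxj⟩ := Set.mem_iUnion₂.mp hxB
  exact hjc ⟨x, hx, hxj⟩
end

section
/- (Theorem 3.2, first item.) Fix a cell index i and input u, and assume the set Fbar i u is bounded. Then there exists ε > 0 such that closure (Fbar i u) + closedBall 0 ε ⊆ interior (Q⁻¹(Δd(i,u))). Consequently, if in addition the admissible-margin set S(i,u) is bounded above, the robustness margin η(i,u) = sSup S(i,u) is strictly positive. -/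
open Metric Set Pointwise

/-- Theorem 3.2, first item: if `Fbar i u` is bounded then some strictly positive
margin is admissible; consequently the robustness margin `η(i,u)` is positive
whenever the admissible-margin set is bounded above. -/
theorem exists_pos_margin_and_eta_pos
    {n q : ℕ} {ι Ud : Type*} [Fintype ι]
    (P : ι → Set (EuclideanSpace ℝ (Fin n)))
    (hdisj : Pairwise (Function.onFun Disjoint P))
    (hcover : (⋃ i, P i) = Set.univ)
    (Q : EuclideanSpace ℝ (Fin n) → ι) (hQ : ∀ x, x ∈ P (Q x))
    (D : Set (EuclideanSpace ℝ (Fin q)))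
    (f : EuclideanSpace ℝ (Fin n) → Ud → EuclideanSpace ℝ (Fin q) → EuclideanSpace ℝ (Fin n))
    (Fbar : ι → Ud → Set (EuclideanSpace ℝ (Fin n)))
    (hFbar : ∀ i u x d, x ∈ P i → d ∈ D → f x u d ∈ Fbar i u)
    (i : ι) (u : Ud)
    (hbdd : Bornology.IsBounded (Fbar i u)) :
    (∃ ε > (0 : ℝ), closure (Fbar i u) + closedBall (0 : EuclideanSpace ℝ (Fin n)) ε ⊆
        interior (conc P (symbSucc P Fbar i u))) ∧
    (BddAbove (marginSet (closure (Fbar i u)) (conc P (symbSucc P Fbar i u))) →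
        0 < eta P Fbar i u) := by
  set K := closure (Fbar i u) with hK
  set V := conc P (symbSucc P Fbar i u) with hV
  have hKcomp : IsCompact K :=
    Metric.isCompact_of_isClosed_isBounded isClosed_closure hbdd.closure
  -- the open set avoiding closures of non-successor cells
  set U : Set (EuclideanSpace ℝ (Fin n)) :=
    (⋃ j ∈ (symbSucc P Fbar i u)ᶜ, closure (P j))ᶜ with hU
  have hUopen : IsOpen U :=
    ((Set.toFinite _).isClosed_biUnion fun j _ => isClosed_closure).isOpen_compl
  have hKU : K ⊆ U := by
    intro x hx
    simp only [hU, mem_compl_iff, mem_iUnion, not_exists]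
    intro j hj hxj
    exact hj ⟨x, hx, hxj⟩
  have hUV : U ⊆ V := by
    intro x hx
    have hxP := hQ x
    have hQx : Q x ∈ symbSucc P Fbar i u := by
      by_contra hc
      exact hx (Set.mem_biUnion hc (subset_closure hxP))
    exact Set.mem_biUnion hQx hxP
  have hUint : U ⊆ interior V := interior_maximal hUV hUopen
  obtain ⟨δ, hδpos, hδ⟩ := hKcomp.exists_cthickening_subset_open hUopen hKU
  have hmem : δ ∈ marginSet K V := by
    refine ⟨hδpos.le, ?_⟩
    rw [hKcomp.add_closedBall_zero hδpos.le]
    exact hδ.trans hUint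
  refine ⟨⟨δ, hδpos, hmem.2⟩, fun hb => ?_⟩
  exact lt_of_lt_of_le hδpos (le_csSup hb hmem)
end

section
/- (Theorem 3.2, second item — alternating simulation.) Let X⁰ ⊆ E be a set of initial states and I₀ ⊆ ι a set of initial cell indices such that for every i ∈ I₀, P i is nonempty and P i ⊆ X⁰. Let μ : E → Ud → ℝ be a perturbation-bound map such that for every x ∈ E and input u, 0 ≤ μ x u and there exists ε with μ x u < ε and closure (Fbar (Q x) u) + closedBall 0 ε ⊆ interior (Q⁻¹(Δd(Q x, u))). Then the relation R = {(x,i) : x ∈ P i} ⊆ E × ι satisfies both alternating-simulation conditions from the symbolic model to the μ-perturbed system: (i) for every i ∈ I₀ there exists x ∈ X⁰ with (x,i) ∈ R; and (ii) for all (x,i) ∈ R, every input u, every d ∈ D, and every y ∈ E with ‖y − f x u d‖ ≤ μ x u, there exists j ∈ Δd(i,u) with y ∈ P j (so (y,j) ∈ R). -/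
open Metric Set Pointwise

/-- Theorem 3.2, second item: the relation `R = {(x,i) : x ∈ P i}` is an alternating
simulation relation from the symbolic model to the μ-perturbed system. -/
theorem alternating_simulation_perturbed
    {n q : ℕ} {ι Ud : Type*} [Fintype ι]
    (P : ι → Set (EuclideanSpace ℝ (Fin n)))
    (hdisj : Pairwise (Function.onFun Disjoint P))
    (hcover : (⋃ i, P i) = Set.univ)
    (Q : EuclideanSpace ℝ (Fin n) → ι) (hQ : ∀ x, x ∈ P (Q x))
    (D : Set (EuclideanSpace ℝ (Fin q)))
    (f : EuclideanSpace ℝ (Fin n) → Ud → EuclideanSpace ℝ (Fin q) → EuclideanSpace ℝ (Fin n))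
    (Fbar : ι → Ud → Set (EuclideanSpace ℝ (Fin n)))
    (hFbar : ∀ i u x d, x ∈ P i → d ∈ D → f x u d ∈ Fbar i u)
    (X0 : Set (EuclideanSpace ℝ (Fin n))) (I0 : Set ι)
    (hI0 : ∀ i ∈ I0, (P i).Nonempty ∧ P i ⊆ X0)
    (μ : EuclideanSpace ℝ (Fin n) → Ud → ℝ)
    (hμ : ∀ x u, 0 ≤ μ x u ∧ ∃ ε : ℝ, μ x u < ε ∧
      closure (Fbar (Q x) u) + closedBall (0 : EuclideanSpace ℝ (Fin n)) ε ⊆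
        interior (conc P (symbSucc P Fbar (Q x) u))) :
    (∀ i ∈ I0, ∃ x ∈ X0, x ∈ P i) ∧
    (∀ x i, x ∈ P i → ∀ u : Ud, ∀ d ∈ D, ∀ y : EuclideanSpace ℝ (Fin n),
      ‖y - f x u d‖ ≤ μ x u → ∃ j ∈ symbSucc P Fbar i u, y ∈ P j) := by
  constructor
  · intro i hi
    obtain ⟨⟨x, hx⟩, hsub⟩ := hI0 i hi
    exact ⟨x, hsub hx, hx⟩
  · intro x i hxi u d hd y hy
    have hiQ : i = Q x := by
      by_contra h
      exact (hdisj h).le_bot ⟨hxi, hQ x⟩ |>.elim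
    subst hiQ
    obtain ⟨hμ0, ε, hμε, hsub⟩ := hμ x u
    have hyin : y ∈ closure (Fbar (Q x) u) + closedBall (0 : EuclideanSpace ℝ (Fin n)) ε := by
      refine ⟨f x u d, subset_closure (hFbar _ u x d hxi hd), y - f x u d, ?_, by module⟩
      simp only [mem_closedBall, dist_zero_right]
      exact hy.trans hμε.le
    have := interior_subset (hsub hyin)
    simpa [conc, Set.mem_iUnion] using this
end

section
/- (Theorem 3.2, third item — tightness of the margin.) Fix a cell index i with P i nonempty, an input u, and assume D is nonempty. Assume Fbar i u is closed and is a δ-over-approximation of the true reachable set, i.e. Fbar i u ⊆ {f x u d : x ∈ P i, d ∈ D} + closedBall 0 δ for some δ ≥ 0. Assume the admissible-margin set S(i,u) is nonempty and bounded above, and let c be any real with c > η(i,u) + δ where η(i,u) = sSup S(i,u). Then there exist x ∈ P i, d ∈ D, and y ∈ E with ‖y − f x u d‖ ≤ c and y ∉ Q⁻¹(Δd(i,u)); in other words, enlarging the perturbation beyond η(i,u) + δ produces a successor of the perturbed system that lies in no symbolic successor cell, so the relation R = {(x,i) : x ∈ P i} fails to be an alternating simulation relation. -/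
open Metric Set Pointwise

/-- Theorem 3.2, third item (tightness): beyond `η(i,u) + δ` the perturbed system has
a successor lying in no symbolic successor cell. -/
theorem margin_tightness
    {n q : ℕ} {ι Ud : Type*} [Fintype ι]
    (P : ι → Set (EuclideanSpace ℝ (Fin n)))
    (hdisj : Pairwise (Function.onFun Disjoint P))
    (hcover : (⋃ i, P i) = Set.univ)
    (Q : EuclideanSpace ℝ (Fin n) → ι) (hQ : ∀ x, x ∈ P (Q x))
    (D : Set (EuclideanSpace ℝ (Fin q)))
    (f : EuclideanSpace ℝ (Fin n) → Ud → EuclideanSpace ℝ (Fin q) → EuclideanSpace ℝ (Fin n))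
    (Fbar : ι → Ud → Set (EuclideanSpace ℝ (Fin n)))
    (hFbar : ∀ i u x d, x ∈ P i → d ∈ D → f x u d ∈ Fbar i u)
    (i : ι) (hPi : (P i).Nonempty) (u : Ud) (hD : D.Nonempty)
    (δ : ℝ) (hδ : 0 ≤ δ)
    (hclosed : IsClosed (Fbar i u))
    (hover : Fbar i u ⊆
      {y : EuclideanSpace ℝ (Fin n) | ∃ x ∈ P i, ∃ d ∈ D, f x u d = y} +
        closedBall (0 : EuclideanSpace ℝ (Fin n)) δ)
    (hS : (marginSet (closure (Fbar i u)) (conc P (symbSucc P Fbar i u))).Nonempty)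
    (hSbdd : BddAbove (marginSet (closure (Fbar i u)) (conc P (symbSucc P Fbar i u))))
    (c : ℝ) (hc : eta P Fbar i u + δ < c) :
    ∃ x ∈ P i, ∃ d ∈ D, ∃ y : EuclideanSpace ℝ (Fin n),
      ‖y - f x u d‖ ≤ c ∧ y ∉ conc P (symbSucc P Fbar i u) := by
  set K := closure (Fbar i u) with hK
  set V := conc P (symbSucc P Fbar i u) with hV
  obtain ⟨ε₀, hε₀⟩ := hS
  have hη0 : 0 ≤ eta P Fbar i u := hε₀.1.trans (le_csSup hSbdd hε₀)
  obtain ⟨ε, hηε, hεc⟩ := exists_between (show eta P Fbar i u < c - δ by linarith)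
  have hεS : ε ∉ marginSet K V := fun h => absurd (le_csSup hSbdd h) (not_le.2 hηε)
  have hε0 : 0 ≤ ε := hη0.trans hηε.le
  have hnsub : ¬ (K + closedBall (0 : EuclideanSpace ℝ (Fin n)) ε ⊆ interior V) :=
    fun h => hεS ⟨hε0, h⟩
  obtain ⟨w, hw, hwV⟩ := Set.not_subset.mp hnsub
  rw [Set.mem_add] at hw
  obtain ⟨z, hz, b, hb, rfl⟩ := hw
  have hzF : z ∈ Fbar i u := by rwa [hK, hclosed.closure_eq] at hz
  obtain ⟨p, hp, b₀, hb₀, hpb⟩ := Set.mem_add.mp (hover hzF)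
  obtain ⟨x, hx, d, hd, rfl⟩ := hp
  have hwc : z + b ∈ closure Vᶜ := by
    rw [closure_compl]; exact hwV
  obtain ⟨y, hy, hdist⟩ := Metric.mem_closure_iff.mp hwc (c - δ - ε) (by linarith)
  refine ⟨x, hx, d, hd, y, ?_, hy⟩
  have hb' : ‖b‖ ≤ ε := mem_closedBall_zero_iff.mp hb
  have hb₀' : ‖b₀‖ ≤ δ := mem_closedBall_zero_iff.mp hb₀
  have : y - f x u d = (y - (z + b)) + b + b₀ := by
    rw [← hpb]; abel
  rw [this]
  calc ‖(y - (z + b)) + b + b₀‖ ≤ ‖y - (z + b)‖ + ‖b‖ + ‖b₀‖ := norm_add₃_le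
    _ ≤ (c - δ - ε) + ε + δ := by
        have : ‖y - (z + b)‖ ≤ c - δ - ε := by
          rw [← dist_eq_norm, dist_comm]; exact hdist.le
        linarith
    _ = c := by ring
end

section
/- (Corollary 3.3, first item — uniform robustness margin.) Assume ι and the input type Ud are finite and nonempty, each Fbar i u is bounded, and each admissible-margin set S(i,u) is bounded above. Define the uniform margin ε* = min over all (i,u) of η(i,u). Then ε* > 0, and for every constant μ with 0 ≤ μ < ε*, the following holds: for all i, all inputs u, all x ∈ P i, all d ∈ D, and all y ∈ E with ‖y − f x u d‖ ≤ μ, there exists j ∈ Δd(i,u) with y ∈ P j; in particular Q y ∈ Δd(i,u). Hence the relation R = {(x,i) : x ∈ P i} is an alternating simulation relation from the symbolic model to the uniformly μ-perturbed system. -/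
open Metric Set Pointwise

/-- The uniform robustness margin `ε* = min_{(i,u)} η(i,u)`. -/
noncomputable def etaMin {E ι Ud : Type*} [SeminormedAddCommGroup E]
    [Fintype ι] [Fintype Ud] [Nonempty ι] [Nonempty Ud]
    (P : ι → Set E) (Fbar : ι → Ud → Set E) : ℝ :=
  Finset.univ.inf' Finset.univ_nonempty (fun p : ι × Ud => eta P Fbar p.1 p.2)

/-- Corollary 3.3, first item: the uniform margin is positive and for any uniform
perturbation bound below it, the cell relation is an alternating simulation relation
to the uniformly perturbed system. -/
theorem uniform_margin_pos_and_altSim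
    {n q : ℕ} {ι Ud : Type*} [Fintype ι] [Nonempty ι] [Fintype Ud] [Nonempty Ud]
    (P : ι → Set (EuclideanSpace ℝ (Fin n)))
    (hdisj : Pairwise (Function.onFun Disjoint P))
    (hcover : (⋃ i, P i) = Set.univ)
    (Q : EuclideanSpace ℝ (Fin n) → ι) (hQ : ∀ x, x ∈ P (Q x))
    (D : Set (EuclideanSpace ℝ (Fin q)))
    (f : EuclideanSpace ℝ (Fin n) → Ud → EuclideanSpace ℝ (Fin q) → EuclideanSpace ℝ (Fin n))
    (Fbar : ι → Ud → Set (EuclideanSpace ℝ (Fin n)))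
    (hFbar : ∀ i u x d, x ∈ P i → d ∈ D → f x u d ∈ Fbar i u)
    (hbdd : ∀ i u, Bornology.IsBounded (Fbar i u))
    (hSbdd : ∀ i u, BddAbove (marginSet (closure (Fbar i u)) (conc P (symbSucc P Fbar i u)))) :
    0 < etaMin P Fbar ∧
    ∀ μ : ℝ, 0 ≤ μ → μ < etaMin P Fbar →
      ∀ i : ι, ∀ u : Ud, ∀ x ∈ P i, ∀ d ∈ D, ∀ y : EuclideanSpace ℝ (Fin n),
        ‖y - f x u d‖ ≤ μ →
        (∃ j ∈ symbSucc P Fbar i u, y ∈ P j) ∧ Q y ∈ symbSucc P Fbar i u := by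
  classical
  have key : ∀ i u, ∃ ε > (0:ℝ),
      ε ∈ marginSet (closure (Fbar i u)) (conc P (symbSucc P Fbar i u)) := by
    intro i u
    set K := closure (Fbar i u) with hKdef
    set Δ := symbSucc P Fbar i u with hΔdef
    set V := conc P Δ with hVdef
    have hK : IsCompact K := (hbdd i u).isCompact_closure
    set W : Set (EuclideanSpace ℝ (Fin n)) := ⋃ j ∈ (Δᶜ : Set ι), closure (P j) with hWdef
    have hWclosed : IsClosed W :=
      Set.Finite.isClosed_biUnion (Set.toFinite _) (fun j _ => isClosed_closure)
    have hsub : Wᶜ ⊆ V := by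
      intro x hx
      have hxmem : x ∈ ⋃ i, P i := hcover ▸ Set.mem_univ x
      obtain ⟨j, hj⟩ := Set.mem_iUnion.1 hxmem
      have hjΔ : j ∈ Δ := by
        by_contra hjc
        exact hx (Set.mem_biUnion hjc (subset_closure hj))
      exact Set.mem_biUnion hjΔ hj
    have hKW : K ⊆ Wᶜ := by
      intro x hx hxW
      obtain ⟨j, hjc, hxj⟩ := Set.mem_iUnion₂.1 hxW
      exact hjc ⟨x, hx, hxj⟩
    obtain ⟨ε, hε, hsub2⟩ :=
      hK.exists_cthickening_subset_open hWclosed.isOpen_compl hKW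
    refine ⟨ε, hε, le_of_lt hε, ?_⟩
    intro z hz
    obtain ⟨a, ha, b, hb, rfl⟩ := Set.mem_add.1 hz
    have hdist : dist (a + b) a ≤ ε := by
      rw [dist_eq_norm, add_sub_cancel_left]
      simpa using hb
    have hmem : a + b ∈ cthickening ε K :=
      mem_cthickening_of_dist_le (a + b) a ε K ha hdist
    exact interior_maximal hsub hWclosed.isOpen_compl (hsub2 hmem)
  have hetapos : ∀ i u, 0 < eta P Fbar i u := by
    intro i u
    obtain ⟨ε, hε, hεS⟩ := key i u
    exact lt_of_lt_of_le hε (le_csSup (hSbdd i u) hεS)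
  have hmin_pos : 0 < etaMin P Fbar := by
    rw [etaMin, Finset.lt_inf'_iff]
    exact fun p _ => hetapos p.1 p.2
  refine ⟨hmin_pos, ?_⟩
  intro μ hμ0 hμ i u x hx d hd y hy
  have hle : etaMin P Fbar ≤ eta P Fbar i u :=
    Finset.inf'_le _ (Finset.mem_univ ((i, u) : ι × Ud))
  have hμeta : μ < eta P Fbar i u := lt_of_lt_of_le hμ hle
  obtain ⟨ε0, hε0, hε0S⟩ := key i u
  obtain ⟨ε, hεS, hμε⟩ := exists_lt_of_lt_csSup ⟨ε0, hε0S⟩ hμeta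
  have hyV : y ∈ conc P (symbSucc P Fbar i u) := by
    have hyK : y ∈ closure (Fbar i u) + closedBall (0 : EuclideanSpace ℝ (Fin n)) ε := by
      refine Set.mem_add.2 ⟨f x u d, subset_closure (hFbar i u x d hx hd), y - f x u d, ?_, ?_⟩
      · simpa [mem_closedBall, dist_eq_norm] using hy.trans hμε.le
      · abel
    exact interior_subset (hεS.2 hyK)
  obtain ⟨j, hjΔ, hyj⟩ := Set.mem_iUnion₂.1 hyV
  refine ⟨⟨j, hjΔ, hyj⟩, ?_⟩
  have : Q y = j := by
    by_contra hne
    exact Set.disjoint_left.1 (hdisj hne) (hQ y) hyj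
  rw [this]; exact hjΔ
end

section
/- (Corollary 3.3, second item — tightness of the uniform margin.) Assume ι and the input type Ud are finite and nonempty, every cell P i is nonempty, D is nonempty, every Fbar i u is closed and is a δ-over-approximation of the true reachable set (Fbar i u ⊆ {f x u d : x ∈ P i, d ∈ D} + closedBall 0 δ for a fixed δ ≥ 0), and every admissible-margin set S(i,u) is nonempty and bounded above. Let ε* = min over all (i,u) of η(i,u). Then for every constant c > ε* + δ there exist a cell index i, an input u, a point x ∈ P i, a disturbance d ∈ D, and y ∈ E with ‖y − f x u d‖ ≤ c and y ∉ Q⁻¹(Δd(i,u)); hence the relation R = {(x,i) : x ∈ P i} is not an alternating simulation relation from the symbolic model to the uniformly c-perturbed system. -/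
open Metric Set Pointwise

/-- Corollary 3.3, second item: beyond `ε* + δ` the uniformly perturbed system has a
successor lying in no symbolic successor cell, so the cell relation fails to be an
alternating simulation relation. -/
theorem uniform_margin_tightness
    {n q : ℕ} {ι Ud : Type*} [Fintype ι] [Nonempty ι] [Fintype Ud] [Nonempty Ud]
    (P : ι → Set (EuclideanSpace ℝ (Fin n)))
    (hdisj : Pairwise (Function.onFun Disjoint P))
    (hcover : (⋃ i, P i) = Set.univ)
    (hP : ∀ i, (P i).Nonempty)
    (Q : EuclideanSpace ℝ (Fin n) → ι) (hQ : ∀ x, x ∈ P (Q x))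
    (D : Set (EuclideanSpace ℝ (Fin q))) (hD : D.Nonempty)
    (f : EuclideanSpace ℝ (Fin n) → Ud → EuclideanSpace ℝ (Fin q) → EuclideanSpace ℝ (Fin n))
    (Fbar : ι → Ud → Set (EuclideanSpace ℝ (Fin n)))
    (hFbar : ∀ i u x d, x ∈ P i → d ∈ D → f x u d ∈ Fbar i u)
    (δ : ℝ) (hδ : 0 ≤ δ)
    (hclosed : ∀ i u, IsClosed (Fbar i u))
    (hover : ∀ i u, Fbar i u ⊆
      {y : EuclideanSpace ℝ (Fin n) | ∃ x ∈ P i, ∃ d ∈ D, f x u d = y} +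
        closedBall (0 : EuclideanSpace ℝ (Fin n)) δ)
    (hS : ∀ i u, (marginSet (closure (Fbar i u)) (conc P (symbSucc P Fbar i u))).Nonempty)
    (hSbdd : ∀ i u, BddAbove (marginSet (closure (Fbar i u)) (conc P (symbSucc P Fbar i u))))
    (c : ℝ) (hc : etaMin P Fbar + δ < c) :
    ∃ i : ι, ∃ u : Ud, ∃ x ∈ P i, ∃ d ∈ D, ∃ y : EuclideanSpace ℝ (Fin n),
      ‖y - f x u d‖ ≤ c ∧ y ∉ conc P (symbSucc P Fbar i u) := by
  obtain ⟨p, -, hpmin⟩ := Finset.exists_mem_eq_inf' (Finset.univ_nonempty)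
    (fun p : ι × Ud => eta P Fbar p.1 p.2)
  obtain ⟨i, u⟩ := p
  set V := conc P (symbSucc P Fbar i u) with hV
  set K := closure (Fbar i u) with hK
  have hη : eta P Fbar i u + δ < c := by
    have : etaMin P Fbar = eta P Fbar i u := hpmin
    linarith [hc, this ▸ hc]
  obtain ⟨s, hs0, hssub⟩ := hS i u
  have hη0 : 0 ≤ eta P Fbar i u :=
    le_trans hs0 (le_csSup (hSbdd i u) ⟨hs0, hssub⟩)
  set ε : ℝ := (eta P Fbar i u + (c - δ)) / 2 with hε
  have hε1 : eta P Fbar i u < ε := by simp only [hε]; linarith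
  have hε2 : ε < c - δ := by simp only [hε]; linarith
  have hε0 : 0 ≤ ε := le_trans hη0 hε1.le
  have hεnot : ε ∉ marginSet K V := fun h => absurd (le_csSup (hSbdd i u) h) (not_le.mpr hε1)
  have hnsub : ¬ (K + closedBall (0 : EuclideanSpace ℝ (Fin n)) ε ⊆ interior V) :=
    fun h => hεnot ⟨hε0, h⟩
  obtain ⟨y', hy'mem, hy'not⟩ := Set.not_subset.mp hnsub
  obtain ⟨z, hz, b, hb, hzb⟩ := Set.mem_add.mp hy'mem
  have hbn : ‖b‖ ≤ ε := by simpa using mem_closedBall_iff_norm.mp hb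
  have hy'cl : y' ∈ closure Vᶜ := by rw [closure_compl]; exact hy'not
  obtain ⟨y, hyV, hyd⟩ := Metric.mem_closure_iff.mp hy'cl (c - δ - ε) (by linarith)
  have hzF : z ∈ Fbar i u := (hclosed i u).closure_subset hz
  obtain ⟨w, hw, e, he, hwe⟩ := Set.mem_add.mp (hover i u hzF)
  obtain ⟨x, hx, d, hd, hfw⟩ := hw
  have hen : ‖e‖ ≤ δ := by simpa using mem_closedBall_iff_norm.mp he
  refine ⟨i, u, x, hx, d, hd, y, ?_, hyV⟩
  have h1 : ‖y - z‖ ≤ (c - δ - ε) + ε := by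
    have heq : y - z = (y - y') + b := by rw [← hzb]; abel
    calc ‖y - z‖ = ‖(y - y') + b‖ := by rw [heq]
    _ ≤ ‖y - y'‖ + ‖b‖ := norm_add_le _ _
    _ ≤ (c - δ - ε) + ε := by
        have : ‖y - y'‖ = dist y y' := by rw [dist_eq_norm]
        rw [this, dist_comm]
        exact add_le_add hyd.le hbn
  have h2 : ‖z - f x u d‖ ≤ δ := by
    have hz2 : z - f x u d = e := by rw [← hwe, hfw]; abel
    rw [hz2]; exact hen
  calc ‖y - f x u d‖ = ‖(y - z) + (z - f x u d)‖ := by rw [sub_add_sub_cancel]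
  _ ≤ ‖y - z‖ + ‖z - f x u d‖ := norm_add_le _ _
  _ ≤ c := by linarith
end

section
/- (Proposition 3.4, trajectory lifting.) Let Cd : ι → Set Ud be a symbolic controller and μ : E → Ud → ℝ a perturbation bound such that for every x ∈ E and input u, 0 ≤ μ x u and there exists ε with μ x u < ε and closure (Fbar (Q x) u) + closedBall 0 ε ⊆ interior (Q⁻¹(Δd(Q x, u))). Let x : ℕ → E and u : ℕ → Ud be sequences such that for every k ∈ ℕ: u k ∈ Cd (Q (x k)), and there exists d ∈ D with ‖x (k+1) − f (x k) (u k) d‖ ≤ μ (x k) (u k). Then for every k ∈ ℕ, Q (x (k+1)) ∈ Δd(Q (x k), u k); that is, the quantized sequence (Q (x k), u k) is a behavior of the symbolic model controlled by Cd. -/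
open Metric Set Pointwise

/-- Proposition 3.4, trajectory lifting: any closed-loop trajectory of the μ-perturbed
system under the refined controller quantizes to a behavior of the controlled
symbolic model. -/
theorem trajectory_lifting
    {n q : ℕ} {ι Ud : Type*} [Fintype ι]
    (P : ι → Set (EuclideanSpace ℝ (Fin n)))
    (hdisj : Pairwise (Function.onFun Disjoint P))
    (hcover : (⋃ i, P i) = Set.univ)
    (Q : EuclideanSpace ℝ (Fin n) → ι) (hQ : ∀ x, x ∈ P (Q x))
    (D : Set (EuclideanSpace ℝ (Fin q)))
    (f : EuclideanSpace ℝ (Fin n) → Ud → EuclideanSpace ℝ (Fin q) → EuclideanSpace ℝ (Fin n))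
    (Fbar : ι → Ud → Set (EuclideanSpace ℝ (Fin n)))
    (hFbar : ∀ i u x d, x ∈ P i → d ∈ D → f x u d ∈ Fbar i u)
    (Cd : ι → Set Ud)
    (μ : EuclideanSpace ℝ (Fin n) → Ud → ℝ)
    (hμ : ∀ x u, 0 ≤ μ x u ∧ ∃ ε : ℝ, μ x u < ε ∧
      closure (Fbar (Q x) u) + closedBall (0 : EuclideanSpace ℝ (Fin n)) ε ⊆
        interior (conc P (symbSucc P Fbar (Q x) u)))
    (x : ℕ → EuclideanSpace ℝ (Fin n)) (u : ℕ → Ud)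
    (hu : ∀ k, u k ∈ Cd (Q (x k)))
    (hx : ∀ k, ∃ d ∈ D, ‖x (k + 1) - f (x k) (u k) d‖ ≤ μ (x k) (u k)) :
    ∀ k, Q (x (k + 1)) ∈ symbSucc P Fbar (Q (x k)) (u k) := by
  intro k
  obtain ⟨d, hd, hnorm⟩ := hx k
  obtain ⟨hμ0, ε, hμε, hsub⟩ := hμ (x k) (u k)
  have hmem : x (k + 1) ∈ conc P (symbSucc P Fbar (Q (x k)) (u k)) := by
    apply interior_subset
    apply hsub
    have hx1 : x (k + 1) = f (x k) (u k) d + (x (k + 1) - f (x k) (u k) d) := by abel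
    rw [hx1]
    exact Set.add_mem_add (subset_closure (hFbar _ _ _ _ (hQ (x k)) hd))
      (by simpa [Metric.mem_closedBall, dist_zero_right] using hnorm.trans hμε.le)
  obtain ⟨j, hj, hxj⟩ := Set.mem_iUnion₂.mp hmem
  have : j = Q (x (k + 1)) := by
    by_contra h
    exact (hdisj h).le_bot ⟨hxj, hQ (x (k + 1))⟩
  rwa [this] at hj
end

section
/- (Proposition 3.4, specification satisfaction under controller refinement.) Let Cd : ι → Set Ud be a symbolic controller, μ : E → Ud → ℝ a perturbation bound such that for every x ∈ E and input u, 0 ≤ μ x u and there exists ε with μ x u < ε and closure (Fbar (Q x) u) + closedBall 0 ε ⊆ interior (Q⁻¹(Δd(Q x, u))). Let Bspec be a set of symbolic state sequences (Bspec ⊆ Set (ℕ → ι)) such that Cd enforces Bspec on the symbolic model: for all sequences q : ℕ → ι and v : ℕ → Ud, if for every k one has v k ∈ Cd (q k) and q (k+1) ∈ Δd(q k, v k), then q ∈ Bspec. Then for any sequences x : ℕ → E, u : ℕ → Ud satisfying for every k: u k ∈ Cd (Q (x k)) and there exists d ∈ D with ‖x (k+1) − f (x k) (u k) d‖ ≤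 μ (x k) (u k), the quantized state sequence (fun k => Q (x k)) belongs to Bspec. That is, the refined controller C(x) = Cd(Q x) is a controller for the μ-perturbed system and the concretized specification. -/
open Metric Set Pointwise

/-- Proposition 3.4: if the symbolic controller enforces the specification on the
symbolic model, the refined controller enforces the concretized specification on the
μ-perturbed system. -/
theorem controller_refinement_spec
    {n q : ℕ} {ι Ud : Type*} [Fintype ι]
    (P : ι → Set (EuclideanSpace ℝ (Fin n)))
    (hdisj : Pairwise (Function.onFun Disjoint P))
    (hcover : (⋃ i, P i) = Set.univ)
    (Q : EuclideanSpace ℝ (Fin n) → ι) (hQ : ∀ x, x ∈ P (Q x))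
    (D : Set (EuclideanSpace ℝ (Fin q)))
    (f : EuclideanSpace ℝ (Fin n) → Ud → EuclideanSpace ℝ (Fin q) → EuclideanSpace ℝ (Fin n))
    (Fbar : ι → Ud → Set (EuclideanSpace ℝ (Fin n)))
    (hFbar : ∀ i u x d, x ∈ P i → d ∈ D → f x u d ∈ Fbar i u)
    (Cd : ι → Set Ud)
    (μ : EuclideanSpace ℝ (Fin n) → Ud → ℝ)
    (hμ : ∀ x u, 0 ≤ μ x u ∧ ∃ ε : ℝ, μ x u < ε ∧
      closure (Fbar (Q x) u) + closedBall (0 : EuclideanSpace ℝ (Fin n)) ε ⊆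
        interior (conc P (symbSucc P Fbar (Q x) u)))
    (Bspec : Set (ℕ → ι))
    (hCd : ∀ (qs : ℕ → ι) (v : ℕ → Ud),
      (∀ k, v k ∈ Cd (qs k) ∧ qs (k + 1) ∈ symbSucc P Fbar (qs k) (v k)) → qs ∈ Bspec)
    (x : ℕ → EuclideanSpace ℝ (Fin n)) (u : ℕ → Ud)
    (hu : ∀ k, u k ∈ Cd (Q (x k)))
    (hx : ∀ k, ∃ d ∈ D, ‖x (k + 1) - f (x k) (u k) d‖ ≤ μ (x k) (u k)) :
    (fun k => Q (x k)) ∈ Bspec := by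
  apply hCd _ u
  intro k
  refine ⟨hu k, ?_⟩
  obtain ⟨d, hd, hnorm⟩ := hx k
  obtain ⟨hμ0, ε, hμε, hsub⟩ := hμ (x k) (u k)
  have hmem : x (k + 1) ∈ conc P (symbSucc P Fbar (Q (x k)) (u k)) := by
    refine interior_subset (hsub ?_)
    refine Set.mem_add.mpr ⟨f (x k) (u k) d, ?_, x (k + 1) - f (x k) (u k) d, ?_, by abel⟩
    · exact subset_closure (hFbar _ _ _ _ (hQ (x k)) hd)
    · simp only [mem_closedBall, dist_zero_right]
      exact hnorm.trans hμε.le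
  obtain ⟨j, hj, hxj⟩ := by
    simpa only [conc, mem_iUnion, exists_prop] using hmem
  have : j = Q (x (k + 1)) := by
    by_contra hne
    exact (hdisj hne).le_bot ⟨hxj, hQ (x (k + 1))⟩
  exact this ▸ hj
end

section
/- (Escape above the robustness margin.) Let E be a real normed vector space, K ⊆ E a nonempty set and V ⊆ E any set. Define S = {ε : 0 ≤ ε ∧ K + closedBall 0 ε ⊆ interior V}, and assume S is nonempty and bounded above. Then for every ε₀ > sSup S, the thickened set K + closedBall 0 ε₀ meets the complement of V: (K + closedBall 0 ε₀) ∩ Vᶜ ≠ ∅. -/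
open Metric Set Pointwise

/-- Escape above the robustness margin: strictly beyond the supremal admissible margin,
the thickened set meets the complement of `V` itself. -/
theorem escape_above_margin
    {E : Type*} [NormedAddCommGroup E] [NormedSpace ℝ E]
    (K V : Set E) (hK : K.Nonempty)
    (hS : {ε : ℝ | 0 ≤ ε ∧ K + closedBall (0 : E) ε ⊆ interior V}.Nonempty)
    (hbdd : BddAbove {ε : ℝ | 0 ≤ ε ∧ K + closedBall (0 : E) ε ⊆ interior V}) :
    ∀ ε₀ : ℝ, sSup {ε : ℝ | 0 ≤ ε ∧ K + closedBall (0 : E) ε ⊆ interior V} < ε₀ →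
      ((K + closedBall (0 : E) ε₀) ∩ Vᶜ).Nonempty := by
  intro ε₀ hε₀
  set S := {ε : ℝ | 0 ≤ ε ∧ K + closedBall (0 : E) ε ⊆ interior V} with hSdef
  obtain ⟨ε', hε'1, hε'2⟩ := exists_between hε₀
  have hε'nonneg : 0 ≤ ε' := by
    obtain ⟨a, ha0, _⟩ := hS
    exact le_trans ha0 (le_trans (le_csSup hbdd (by exact ⟨ha0, ‹_›⟩)) hε'1.le)
  -- ε' ∉ S
  have hε'notS : ε' ∉ S := fun h => absurd (le_csSup hbdd h) (not_le.mpr hε'1)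
  have hnot : ¬ (K + closedBall (0 : E) ε' ⊆ interior V) := fun h => hε'notS ⟨hε'nonneg, h⟩
  obtain ⟨x, hxmem, hxnot⟩ := not_subset.mp hnot
  -- x ∈ closure Vᶜ
  have hxcl : x ∈ closure Vᶜ := by
    rw [closure_compl]
    exact hxnot
  obtain ⟨y, hyV, hy⟩ := Metric.mem_closure_iff.mp hxcl (ε₀ - ε') (by linarith)
  refine ⟨y, ?_, hyV⟩
  obtain ⟨k, hk, b, hb, rfl⟩ := hxmem
  refine ⟨k, hk, y - k, ?_, by module⟩
  rw [mem_closedBall_zero_iff] at hb ⊢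
  have h1 : ‖y - (k + b)‖ ≤ ε₀ - ε' := by
    rw [← dist_eq_norm']
    exact hy.le
  have h2 : y - k = b + (y - (k + b)) := by abel
  calc ‖y - k‖ = ‖b + (y - (k + b))‖ := by rw [h2]
    _ ≤ ‖b‖ + ‖y - (k + b)‖ := norm_add_le _ _
    _ ≤ ε₀ := by linarith
end
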